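/- Let G be a tangle that is not a simple closed curve. Then G has no end-points and contains no cycles (where a cycle is a simple closed curve S ⊆ G such that S minus some point of S is open in G). -/

import Mathlib

open TopologicalSpace Set

/-- A finite graph: a space which is a finite union of arcs, any two of which meet
in a finite set. -/
def IsFiniteGraph (G : Type*) [TopologicalSpace G] : Prop :=
  ∃ 𝒜 : Finset (Set G),
    (⋃ A ∈ 𝒜, A) = Set.univ ∧
    (∀ A ∈ 𝒜, Nonempty (unitInterval ≃ₜ A)) ∧
    (∀ A ∈ 𝒜, ∀ B ∈ 𝒜, A ≠ B → (A ∩ B).Finite)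

/-- A tangle: a finite graph without cut-points. -/
def IsTangle (G : Type*) [TopologicalSpace G] : Prop :=
  IsFiniteGraph G ∧ ∀ p : G, IsPreconnected ({p}ᶜ : Set G)

/-- A tangle which is not a simple closed curve has no end-points
(points with an arc neighborhood of which they are an endpoint) and contains no cycles
(simple closed curves S ⊆ G with S \ {p} open in G for some p ∈ S). -/
instance : Nontrivial Circle := by
  refine ⟨1, Circle.exp Real.pi, fun h => ?_⟩
  have h2 : ((1 : Circle) : ℂ) = ((Circle.exp Real.pi : Circle) : ℂ) := by rw [h]
  simp only [Circle.coe_exp, Complex.exp_pi_mul_I, OneMemClass.coe_one] at h2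
  norm_num at h2

theorem stmt13 {G : Type*} [MetricSpace G] [CompactSpace G] [ConnectedSpace G] [Nontrivial G]
    (hT : IsTangle G) (hnc : ¬ Nonempty (G ≃ₜ Circle)) :
    (¬ ∃ (p : G) (J : Set G), J ∈ nhds p ∧ ∃ e : unitInterval ≃ₜ J, (e 0 : G) = p) ∧
    (¬ ∃ S : Set G, Nonempty (S ≃ₜ Circle) ∧ ∃ p ∈ S, IsOpen (S \ {p})) := by
  obtain ⟨-, hcut⟩ := hT
  constructor
  · rintro ⟨p, J, hJ, e, he⟩
    set f : unitInterval → G := fun s => (e s : G) with hf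
    have hfc : Continuous f := continuous_subtype_val.comp e.continuous
    have hfinj : Function.Injective f := fun a b h => e.injective (Subtype.val_injective h)
    have hf0 : f 0 = p := he
    -- get ε from continuity
    have hmem : f ⁻¹' (interior J) ∈ nhds (0 : unitInterval) := by
      apply hfc.continuousAt.preimage_mem_nhds
      rw [hf0]
      exact interior_mem_nhds.mpr hJ
    obtain ⟨ε, hε, hball⟩ := Metric.mem_nhds_iff.mp hmem
    set δ := min ε 1 with hδ
    have hδ0 : 0 < δ := lt_min hε one_pos
    have hδ1 : δ ≤ 1 := min_le_right _ _
    have hδε : δ ≤ ε := min_le_left _ _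
    set m : unitInterval := ⟨δ/3, by constructor <;> nlinarith⟩ with hm
    set t : unitInterval := ⟨δ/2, by constructor <;> nlinarith⟩ with ht
    -- points with coordinate < δ/2 map into interior J
    have hsub : ∀ s : unitInterval, (s : ℝ) ≤ δ/2 → f s ∈ interior J := by
      intro s hs
      apply hball
      rw [Metric.mem_ball, Subtype.dist_eq]
      simp only [Real.dist_eq, Icc.coe_zero, sub_zero]
      rw [abs_of_nonneg s.2.1]
      linarith
    set O : Set unitInterval := {s | (s : ℝ) < δ/3} with hO
    have hOopen : IsOpen O := isOpen_lt continuous_subtype_val continuous_const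
    set u : Set G := f '' O with hu
    have huI : u ⊆ interior J := by
      rintro x ⟨s, hs, rfl⟩
      have hs' : (s : ℝ) < δ/3 := hs
      exact hsub s (by linarith)
    have huopen : IsOpen u := by
      have h1 : IsOpen ((e : unitInterval → J) '' O) := e.isOpenMap O hOopen
      obtain ⟨V, hV, hVeq⟩ := isOpen_induced_iff.mp h1
      have h2 : u = Subtype.val '' ((Subtype.val : J → G) ⁻¹' V) := by
        rw [hVeq, hu, image_image]
      rw [h2, Subtype.image_preimage_coe]
      have : J ∩ V = interior J ∩ V := by
        apply Subset.antisymm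
        · intro x hx
          have : x ∈ u := by rw [h2, Subtype.image_preimage_coe]; exact hx
          exact ⟨huI this, hx.2⟩
        · exact fun x hx => ⟨interior_subset hx.1, hx.2⟩
      rw [this]
      exact isOpen_interior.inter hV
    set C : Set G := f '' {s | (s : ℝ) ≤ δ/3} with hC
    have hCcl : IsClosed C :=
      (((isClosed_le continuous_subtype_val continuous_const).isCompact).image hfc).isClosed
    set q : G := f m with hq
    have hqC : ∀ x ∈ C, x ≠ q → x ∈ u := by
      rintro x ⟨s, hs, rfl⟩ hne
      refine ⟨s, ?_, rfl⟩
      simp only [hO, mem_setOf_eq]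
      have hs' : (s : ℝ) ≤ δ/3 := hs
      rcases lt_or_eq_of_le hs' with h | h
      · exact h
      · exact absurd (congrArg f (Subtype.ext h)) hne
    -- apply no-cut-point at q
    have := hcut q u Cᶜ huopen hCcl.isOpen_compl ?_ ⟨p, ?_, ?_⟩ ⟨f t, ?_, ?_⟩
    · obtain ⟨x, -, hxu, hxC⟩ := this
      exact hxC (hC ▸ image_mono (f := f) (fun s (hs : (s:ℝ) < δ/3) => le_of_lt hs) hxu)
    · intro x hx
      by_cases hxC : x ∈ C
      · exact Or.inl (hqC x hxC hx)
      · exact Or.inr hxC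
    · intro h
      rw [mem_singleton_iff] at h
      have : (0 : unitInterval) = m := hfinj (hf0.trans h)
      have := congrArg Subtype.val this
      simp only [Icc.coe_zero, hm] at this
      linarith [this]
    · exact ⟨0, by simp [hO, hδ0], hf0⟩
    · intro h
      rw [mem_singleton_iff] at h
      have : t = m := hfinj h
      have := congrArg Subtype.val this
      simp only [hm, ht] at this
      linarith
    · rintro ⟨s, hs, hsf⟩
      have : s = t := hfinj hsf
      rw [this] at hs
      simp only [mem_setOf_eq, ht] at hs
      linarith
  · rintro ⟨S, ⟨eS⟩, p, hp, hopen⟩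
    have hScs : CompactSpace S := eS.symm.compactSpace
    have hScomp : IsCompact S := isCompact_iff_compactSpace.mpr hScs
    have hScl : IsClosed S := hScomp.isClosed
    by_cases hSuniv : S = univ
    · exact hnc ⟨((Homeomorph.Set.univ G).symm.trans ((Homeomorph.setCongr hSuniv.symm).trans eS))⟩
    · obtain ⟨w, hw⟩ := (ne_univ_iff_exists_notMem S).mp hSuniv
      have : Nontrivial S := eS.toEquiv.nontrivial
      obtain ⟨x, hxne⟩ := exists_ne (⟨p, hp⟩ : S)
      have := hcut p (S \ {p}) Sᶜ hopen hScl.isOpen_compl ?_ ⟨(x : G), ?_, ?_⟩ ⟨w, ?_, ?_⟩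
      · obtain ⟨y, -, hy1, hy2⟩ := this
        exact hy2 hy1.1
      · intro z hz
        by_cases hzS : z ∈ S
        · exact Or.inl ⟨hzS, hz⟩
        · exact Or.inr hzS
      · exact fun h => hxne (Subtype.ext h)
      · exact ⟨x.2, fun h => hxne (Subtype.ext h)⟩
      · exact fun h => hw (h ▸ hp)
      · exact hw
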